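/- Let m ≥ 1 be an integer, s₀, s₁ > 0 reals, and a₁ a complex number with Re(a₁) > 0. Then for every integer α ≥ m, |1/(2α+2m+2+s₀) + a₁/(2α+2m+2+s₁)|² ≥ ((α−m+1)/(α+m+1)) |1/(2α+2+s₀) + a₁/(2α+2+s₁)|². -/

import Mathlib

lemma key19 (a mr s : ℝ) (h1 : 1 ≤ mr) (h2 : mr ≤ a) (hs : 0 < s) :
    (a - mr + 1) * (2*a + 2*mr + 2 + s)^2 ≤ (a + mr + 1) * (2*a + 2 + s)^2 := by
  have hmr : 0 < mr := lt_of_lt_of_le zero_lt_one h1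
  have hc2 : 0 < a + mr + 1 := by linarith
  nlinarith [mul_pos (mul_pos hmr hs) hs, mul_pos (mul_pos hmr hs) hc2,
    mul_pos (mul_pos hmr hmr) hc2]

theorem stmt19 (m : ℕ) (hm : 1 ≤ m) (s₀ s₁ : ℝ) (hs₀ : 0 < s₀) (hs₁ : 0 < s₁)
    (a₁ : ℂ) (ha : 0 < a₁.re) (α : ℕ) (hα : m ≤ α) :
    ‖1 / ((2 * α + 2 * m + 2 + s₀ : ℝ) : ℂ)
        + a₁ / ((2 * α + 2 * m + 2 + s₁ : ℝ) : ℂ)‖ ^ 2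
      ≥ (((α : ℝ) - m + 1) / ((α : ℝ) + m + 1)) *
        ‖1 / ((2 * α + 2 + s₀ : ℝ) : ℂ)
          + a₁ / ((2 * α + 2 + s₁ : ℝ) : ℂ)‖ ^ 2 := by
  have hm' : (1:ℝ) ≤ (m:ℝ) := by exact_mod_cast hm
  have hα' : ((m:ℝ)) ≤ (α:ℝ) := by exact_mod_cast hα
  set a : ℝ := (α:ℝ)
  set mr : ℝ := (m:ℝ)
  set A : ℝ := 2*a + 2 + s₀ with hAdef
  set B : ℝ := 2*a + 2 + s₁ with hBdef
  set A' : ℝ := 2*a + 2*mr + 2 + s₀ with hA'def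
  set B' : ℝ := 2*a + 2*mr + 2 + s₁ with hB'def
  have ha0 : (0:ℝ) ≤ a := le_trans (le_trans zero_le_one hm') hα'
  have hmr0 : (0:ℝ) < mr := lt_of_lt_of_le zero_lt_one hm'
  have hA : 0 < A := by positivity
  have hB : 0 < B := by positivity
  have hA' : 0 < A' := by rw [hA'def]; nlinarith
  have hB' : 0 < B' := by rw [hB'def]; nlinarith
  clear_value A B A' B'
  clear_value a mr
  have hc1 : 0 < a - mr + 1 := by linarith
  have hc2 : 0 < a + mr + 1 := by linarith
  have habs1 : ‖1 / (A' : ℂ) + a₁ / (B' : ℂ)‖ ^ 2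
      = (1/A' + a₁.re/B')^2 + (a₁.im/B')^2 := by
    rw [Complex.sq_norm, Complex.normSq_apply]
    simp only [Complex.add_re, Complex.add_im, Complex.div_ofReal_re, Complex.div_ofReal_im,
      Complex.one_re, Complex.one_im]
    ring
  have habs2 : ‖1 / (A : ℂ) + a₁ / (B : ℂ)‖ ^ 2
      = (1/A + a₁.re/B)^2 + (a₁.im/B)^2 := by
    rw [Complex.sq_norm, Complex.normSq_apply]
    simp only [Complex.add_re, Complex.add_im, Complex.div_ofReal_re, Complex.div_ofReal_im,
      Complex.one_re, Complex.one_im]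
    ring
  rw [habs1, habs2, ge_iff_le]
  set x : ℝ := a₁.re
  set y : ℝ := a₁.im
  set c : ℝ := (a - mr + 1) / (a + mr + 1) with hcdef
  -- key facts
  have KA : (a - mr + 1) * A'^2 ≤ (a + mr + 1) * A^2 := by
    rw [hAdef, hA'def]; exact key19 a mr s₀ hm' hα' hs₀
  have KB : (a - mr + 1) * B'^2 ≤ (a + mr + 1) * B^2 := by
    rw [hBdef, hB'def]; exact key19 a mr s₁ hm' hα' hs₁
  have KAB : (a - mr + 1) * (A' * B') ≤ (a + mr + 1) * (A * B) := by
    have hsq : ((a - mr + 1) * (A' * B'))^2 ≤ ((a + mr + 1) * (A * B))^2 := by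
      have := mul_le_mul KA KB (by positivity) (by positivity)
      nlinarith [this]
    exact (pow_le_pow_iff_left₀ (by positivity) (by positivity) two_ne_zero).mp hsq
  have T1 : c * (1/A^2) ≤ 1/A'^2 := by
    rw [hcdef, div_mul_eq_mul_div, mul_one_div, div_div,
      div_le_div_iff₀ (by positivity) (by positivity)]
    linarith [KA]
  have T2 : c * (x/(A*B)) ≤ x/(A'*B') := by
    rw [hcdef, div_mul_div_comm, div_le_div_iff₀ (by positivity) (by positivity)]
    linarith [mul_le_mul_of_nonneg_left KAB (le_of_lt ha)]
  have T3 : c * (x^2/B^2) ≤ x^2/B'^2 := by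
    rw [hcdef, div_mul_div_comm, div_le_div_iff₀ (by positivity) (by positivity)]
    linarith [mul_le_mul_of_nonneg_left KB (sq_nonneg x)]
  have T4 : c * (y^2/B^2) ≤ y^2/B'^2 := by
    rw [hcdef, div_mul_div_comm, div_le_div_iff₀ (by positivity) (by positivity)]
    linarith [mul_le_mul_of_nonneg_left KB (sq_nonneg y)]
  have expand : c * ((1/A + x/B)^2 + (y/B)^2)
      = c * (1/A^2) + 2 * (c * (x/(A*B))) + c * (x^2/B^2) + c * (y^2/B^2) := by
    field_simp
    ring
  have expand' : (1/A' + x/B')^2 + (y/B')^2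
      = 1/A'^2 + 2 * (x/(A'*B')) + x^2/B'^2 + y^2/B'^2 := by
    field_simp
    ring
  rw [expand, expand']
  linarith
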